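/- arXiv:2006.11094 — 3 statements merged into one kernel-verified Lean document; each statement's English description precedes it below -/
import Mathlib

section
/- For fixed symmetric positive definite matrices S_YY ∈ R^{p×p}, S_XX ∈ R^{q×q} and any S_YX ∈ R^{p×q}, the function g(Λ, Θ) = -c·ln det(Λ) + ⟨Λ, S_YY⟩ + 2⟨Θ, S_YX⟩ + ⟨ΘΛ^{-1}Θ^T, S_XX⟩, defined on (Λ, Θ) with Λ symmetric positive definite and c > 0, is jointly convex in (Λ, Θ). -/
open Matrix

/-- The trace inner product `⟨A, B⟩ = tr(AᵀB)` on matrices. -/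
noncomputable def traceInner {m n : Type*} [Fintype m] [Fintype n]
    (A B : Matrix m n ℝ) : ℝ := (Aᵀ * B).trace

set_option linter.unusedSectionVars false

open scoped MatrixOrder

section Aux

variable {n : Type*} [Fintype n] [DecidableEq n]

lemma trace_eq_sum_eigs {A : Matrix n n ℝ} (hA : A.IsHermitian) :
    A.trace = ∑ i, hA.eigenvalues i := by
  conv_lhs => rw [hA.spectral_theorem, Unitary.conjStarAlgAut_apply]
  rw [Matrix.trace_mul_comm, ← Matrix.mul_assoc,
    (Matrix.mem_unitaryGroup_iff'.mp (hA.eigenvectorUnitary).2), Matrix.one_mul,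
    Matrix.trace_diagonal]
  simp

lemma trace_psd_nonneg {A : Matrix n n ℝ} (hA : A.PosSemidef) : 0 ≤ A.trace := by
  rw [trace_eq_sum_eigs hA.isHermitian]
  exact Finset.sum_nonneg fun i _ => hA.eigenvalues_nonneg i

lemma log_det_le_trace {A : Matrix n n ℝ} (hA : A.PosDef) :
    Real.log A.det ≤ A.trace - Fintype.card n := by
  rw [hA.isHermitian.det_eq_prod_eigenvalues, trace_eq_sum_eigs hA.isHermitian]
  simp only [RCLike.ofReal_real_eq_id, id_eq]
  rw [Real.log_prod (fun i _ => (hA.eigenvalues_pos i).ne')]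
  have h : ∀ i ∈ Finset.univ, Real.log (hA.isHermitian.eigenvalues i)
      ≤ hA.isHermitian.eigenvalues i - 1 :=
    fun i _ => Real.log_le_sub_one_of_pos (hA.eigenvalues_pos i)
  calc ∑ i, Real.log (hA.isHermitian.eigenvalues i)
      ≤ ∑ i, (hA.isHermitian.eigenvalues i - 1) := Finset.sum_le_sum h
    _ = _ := by rw [Finset.sum_sub_distrib]; simp [Finset.card_univ]

lemma posDef_conj {R A : Matrix n n ℝ} (hA : A.PosDef) (hR : R.IsHermitian)
    (hRdet : IsUnit R.det) : (R * A * R).PosDef := by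
  have hRt : Rᵀ = R := by
    rw [← R.conjTranspose_eq_transpose_of_trivial, hR.eq]
  refine Matrix.PosDef.of_dotProduct_mulVec_pos ?_ ?_
  · have := Matrix.isHermitian_conjTranspose_mul_mul R hA.isHermitian
    rwa [hR.eq] at this
  · intro x hx
    have hRx : R *ᵥ x ≠ 0 := by
      intro h
      apply hx
      have := congrArg (fun y => R⁻¹ *ᵥ y) h
      simpa [Matrix.mulVec_mulVec, Matrix.nonsing_inv_mul _ hRdet] using this
    have key : star x ⬝ᵥ ((R * A * R) *ᵥ x) = star (R *ᵥ x) ⬝ᵥ (A *ᵥ (R *ᵥ x)) := by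
      simp only [star_trivial, ← Matrix.mulVec_mulVec]
      rw [Matrix.dotProduct_mulVec x R, ← Matrix.mulVec_transpose, hRt]
    rw [key]
    exact hA.dotProduct_mulVec_pos hRx

lemma log_det_pair {X A : Matrix n n ℝ} (hX : X.PosDef) (hA : A.PosDef) :
    Real.log X.det + Real.log A.det ≤ (X * A).trace - Fintype.card n := by
  set R := CFC.sqrt X with hRdef
  have hRpsd : R.PosSemidef := (CFC.sqrt_nonneg X).posSemidef
  have hRR : R * R = X := CFC.sqrt_mul_sqrt_self X hX.posSemidef.nonneg
  have hRdet : IsUnit R.det := by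
    have : R.det * R.det = X.det := by rw [← Matrix.det_mul, hRR]
    have hx := hX.det_pos
    refine (Ne.isUnit ?_)
    intro h; rw [h, mul_zero] at this; exact hx.ne this
  have hM : (R * A * R).PosDef := posDef_conj hA hRpsd.isHermitian hRdet
  have hdet : (R * A * R).det = X.det * A.det := by
    rw [Matrix.det_mul, Matrix.det_mul, mul_comm R.det A.det, mul_assoc, ← Matrix.det_mul, hRR]
    ring
  have htr : (R * A * R).trace = (X * A).trace := by
    rw [Matrix.trace_mul_comm, ← Matrix.mul_assoc, hRR]
  have := log_det_le_trace hM
  rw [hdet, htr, Real.log_mul hX.det_pos.ne' hA.det_pos.ne'] at this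
  exact this

variable {m : Type*} [Fintype m] [DecidableEq m]

lemma trace_conj_psd_nonneg {S : Matrix n n ℝ} (hS : S.PosSemidef)
    {L : Matrix m m ℝ} (hL : L.PosSemidef) (A : Matrix n m ℝ) :
    0 ≤ (A * L * Aᵀ * S).trace := by
  set R := CFC.sqrt S with hRdef
  have hRpsd : R.PosSemidef := (CFC.sqrt_nonneg S).posSemidef
  have hRt : Rᵀ = R := by
    rw [← R.conjTranspose_eq_transpose_of_trivial, hRpsd.isHermitian.eq]
  have hRR : R * R = S := CFC.sqrt_mul_sqrt_self S hS.nonneg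
  have key : (A * L * Aᵀ * S).trace = ((R * A) * L * (R * A)ᴴ).trace := by
    rw [← hRR, ← Matrix.mul_assoc, Matrix.trace_mul_comm]
    rw [Matrix.conjTranspose_eq_transpose_of_trivial, Matrix.transpose_mul, hRt]
    simp [Matrix.mul_assoc]
  rw [key]
  exact trace_psd_nonneg (hL.mul_mul_conjTranspose_same (R * A))

lemma frac_key_ineq {S : Matrix n n ℝ} (hS : S.PosSemidef)
    {L : Matrix m m ℝ} (hLs : L.IsSymm) (hL : L.PosDef) (T Y : Matrix n m ℝ) :
    ((Y * Tᵀ + T * Yᵀ - Y * L * Yᵀ) * S).trace ≤ ((T * L⁻¹ * Tᵀ) * S).trace := by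
  have hdet : IsUnit L.det := hL.det_pos.ne'.isUnit
  have hLi : (L⁻¹)ᵀ = L⁻¹ := by
    rw [Matrix.transpose_nonsing_inv, hLs.eq]
  have key : T * L⁻¹ * Tᵀ - (Y * Tᵀ + T * Yᵀ - Y * L * Yᵀ)
      = (T * L⁻¹ - Y) * L * (T * L⁻¹ - Y)ᵀ := by
    simp only [Matrix.transpose_sub, Matrix.transpose_mul, hLi, Matrix.sub_mul, Matrix.mul_sub]
    simp only [Matrix.mul_assoc, Matrix.nonsing_inv_mul_cancel_left _ _ hdet,
      Matrix.mul_nonsing_inv_cancel_left _ _ hdet]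
    abel
  have h0 : 0 ≤ (((T * L⁻¹ - Y) * L * (T * L⁻¹ - Y)ᵀ) * S).trace :=
    trace_conj_psd_nonneg hS hL.posSemidef _
  rw [← key, Matrix.sub_mul, Matrix.trace_sub] at h0
  linarith

lemma posDef_combo {A B : Matrix n n ℝ} (hA : A.PosDef) (hB : B.PosDef)
    {a b : ℝ} (ha : 0 ≤ a) (hb : 0 ≤ b) (hab : a + b = 1) :
    (a • A + b • B).PosDef := by
  refine Matrix.PosDef.of_dotProduct_mulVec_pos ?_ ?_
  · have htA : Aᵀ = A := by
      rw [← A.conjTranspose_eq_transpose_of_trivial, hA.isHermitian.eq]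
    have htB : Bᵀ = B := by
      rw [← B.conjTranspose_eq_transpose_of_trivial, hB.isHermitian.eq]
    show (a • A + b • B)ᴴ = _
    simp [htA, htB]
  · intro x hx
    have qA := hA.dotProduct_mulVec_pos hx
    have qB := hB.dotProduct_mulVec_pos hx
    have : star x ⬝ᵥ ((a • A + b • B) *ᵥ x)
        = a * (star x ⬝ᵥ (A *ᵥ x)) + b * (star x ⬝ᵥ (B *ᵥ x)) := by
      simp [Matrix.add_mulVec, Matrix.smul_mulVec, dotProduct_add, dotProduct_smul]
    rw [this]
    rcases eq_or_lt_of_le ha with h | h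
    · rcases eq_or_lt_of_le hb with h2 | h2
      · exfalso; rw [← h, ← h2] at hab; norm_num at hab
      · have : a * (star x ⬝ᵥ (A *ᵥ x)) = 0 := by rw [← h]; ring
        rw [this, zero_add]; exact mul_pos h2 qB
    · have h1 : 0 < a * (star x ⬝ᵥ (A *ᵥ x)) := mul_pos h qA
      have h2 : 0 ≤ b * (star x ⬝ᵥ (B *ᵥ x)) := mul_nonneg hb qB.le
      linarith

lemma traceInner_frac_eq {L : Matrix m m ℝ} (hLs : L.IsSymm) (T : Matrix n m ℝ)
    (S : Matrix n n ℝ) : traceInner (T * L⁻¹ * Tᵀ) S = ((T * L⁻¹ * Tᵀ) * S).trace := by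
  unfold traceInner
  rw [show (T * L⁻¹ * Tᵀ)ᵀ = T * L⁻¹ * Tᵀ by
    simp [Matrix.transpose_mul, Matrix.transpose_nonsing_inv, hLs.eq, Matrix.mul_assoc]]

end Aux

/-- For fixed symmetric positive definite `S_YY ∈ ℝ^{p×p}`, `S_XX ∈ ℝ^{q×q}`, any
`S_YX ∈ ℝ^{p×q}` and `c > 0`, the function
`g(Λ, Θ) = -c·ln det Λ + ⟨Λ, S_YY⟩ + 2⟨Θ, S_YX⟩ + ⟨ΘΛ⁻¹Θᵀ, S_XX⟩`
is jointly convex on `{(Λ, Θ) : Λ symmetric positive definite, Θ ∈ ℝ^{q×p}}`. -/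
theorem cggm_negloglik_jointly_convex
    (p q : ℕ) (c : ℝ) (hc : 0 < c)
    (SYY : Matrix (Fin p) (Fin p) ℝ) (hSYYs : SYY.IsSymm) (hSYY : SYY.PosDef)
    (SXX : Matrix (Fin q) (Fin q) ℝ) (hSXXs : SXX.IsSymm) (hSXX : SXX.PosDef)
    (SYX : Matrix (Fin p) (Fin q) ℝ) :
    ConvexOn ℝ
      {P : Matrix (Fin p) (Fin p) ℝ × Matrix (Fin q) (Fin p) ℝ |
        P.1.IsSymm ∧ P.1.PosDef}
      (fun P =>
        -c * Real.log P.1.det + traceInner P.1 SYY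
          + 2 * traceInner P.2ᵀ SYX + traceInner (P.2 * P.1⁻¹ * P.2ᵀ) SXX) := by
  constructor
  · -- convexity of the set
    intro P₁ h₁ P₂ h₂ a b ha hb hab
    obtain ⟨hs₁, hpd₁⟩ := h₁
    obtain ⟨hs₂, hpd₂⟩ := h₂
    refine ⟨?_, ?_⟩
    · show ((a • P₁ + b • P₂).1)ᵀ = _
      simp [Prod.fst_add, Prod.smul_fst, Matrix.transpose_add, Matrix.transpose_smul,
        hs₁.eq, hs₂.eq]
    · show ((a • P₁ + b • P₂).1).PosDef
      simpa [Prod.fst_add, Prod.smul_fst] using posDef_combo hpd₁ hpd₂ ha hb hab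
  · intro P₁ h₁ P₂ h₂ a b ha hb hab
    obtain ⟨hs₁, hpd₁⟩ := h₁
    obtain ⟨hs₂, hpd₂⟩ := h₂
    set Λ₁ := P₁.1; set Θ₁ := P₁.2; set Λ₂ := P₂.1; set Θ₂ := P₂.2
    have hfst : (a • P₁ + b • P₂).1 = a • Λ₁ + b • Λ₂ := rfl
    have hsnd : (a • P₁ + b • P₂).2 = a • Θ₁ + b • Θ₂ := rfl
    set Λ : Matrix (Fin p) (Fin p) ℝ := a • Λ₁ + b • Λ₂ with hΛdef
    set Θ : Matrix (Fin q) (Fin p) ℝ := a • Θ₁ + b • Θ₂ with hΘdef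
    have hΛ : Λ.PosDef := posDef_combo hpd₁ hpd₂ ha hb hab
    have hΛs : Λ.IsSymm := by
      show Λᵀ = Λ
      simp [hΛdef, Matrix.transpose_add, Matrix.transpose_smul, hs₁.eq, hs₂.eq]
    have hdet : IsUnit Λ.det := hΛ.det_pos.ne'.isUnit
    -- piece 1 : log-det
    have hlog : -c * Real.log Λ.det
        ≤ a * (-c * Real.log Λ₁.det) + b * (-c * Real.log Λ₂.det) := by
      have hX : (Λ⁻¹).PosDef := hΛ.inv
      have h1 := log_det_pair hX hpd₁
      have h2 := log_det_pair hX hpd₂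
      have hXdet : Real.log (Λ⁻¹).det = -Real.log Λ.det := by
        rw [Matrix.det_nonsing_inv, Ring.inverse_eq_inv', Real.log_inv]
      have htr : a * (Λ⁻¹ * Λ₁).trace + b * (Λ⁻¹ * Λ₂).trace
          = (Fintype.card (Fin p) : ℝ) := by
        have : Λ⁻¹ * Λ = 1 := Matrix.nonsing_inv_mul _ hdet
        have expand : Λ⁻¹ * Λ = a • (Λ⁻¹ * Λ₁) + b • (Λ⁻¹ * Λ₂) := by
          simp [hΛdef, Matrix.mul_add, Matrix.mul_smul]
        rw [expand] at this
        have := congrArg Matrix.trace this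
        simpa [Matrix.trace_add, Matrix.trace_smul, smul_eq_mul, Matrix.trace_one] using this
      rw [hXdet] at h1 h2
      have key : -Real.log Λ.det ≤ -(a * Real.log Λ₁.det + b * Real.log Λ₂.det) := by
        have ha1 := mul_le_mul_of_nonneg_left h1 ha
        have hb1 := mul_le_mul_of_nonneg_left h2 hb
        have e : -Real.log Λ.det + (a * Real.log Λ₁.det + b * Real.log Λ₂.det)
            = a * (-Real.log Λ.det + Real.log Λ₁.det)
              + b * (-Real.log Λ.det + Real.log Λ₂.det) := by
          linear_combination Real.log Λ.det * hab
        have e2 : a * ((Λ⁻¹ * Λ₁).trace - (Fintype.card (Fin p) : ℝ))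
            + b * ((Λ⁻¹ * Λ₂).trace - (Fintype.card (Fin p) : ℝ)) = 0 := by
          linear_combination htr - (Fintype.card (Fin p) : ℝ) * hab
        linarith [add_le_add ha1 hb1]
      linarith [mul_le_mul_of_nonneg_left key hc.le]
    -- piece 2 : linear terms
    have hlin1 : traceInner Λ SYY
        = a * traceInner Λ₁ SYY + b * traceInner Λ₂ SYY := by
      simp [traceInner, hΛdef, Matrix.transpose_add, Matrix.transpose_smul,
        Matrix.add_mul, Matrix.smul_mul, Matrix.trace_add, Matrix.trace_smul, smul_eq_mul]
    have hlin2 : traceInner Θᵀ SYX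
        = a * traceInner Θ₁ᵀ SYX + b * traceInner Θ₂ᵀ SYX := by
      simp [traceInner, hΘdef, Matrix.transpose_add, Matrix.transpose_smul,
        Matrix.add_mul, Matrix.smul_mul, Matrix.trace_add, Matrix.trace_smul, smul_eq_mul]
    -- piece 3 : matrix fractional term
    have hfrac : traceInner (Θ * Λ⁻¹ * Θᵀ) SXX
        ≤ a * traceInner (Θ₁ * Λ₁⁻¹ * Θ₁ᵀ) SXX + b * traceInner (Θ₂ * Λ₂⁻¹ * Θ₂ᵀ) SXX := by
      set Y : Matrix (Fin q) (Fin p) ℝ := Θ * Λ⁻¹ with hYdef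
      have hinv : (Λ⁻¹)ᵀ = Λ⁻¹ := by rw [Matrix.transpose_nonsing_inv, hΛs.eq]
      have eqY : Y * Θᵀ + Θ * Yᵀ - Y * Λ * Yᵀ = Θ * Λ⁻¹ * Θᵀ := by
        simp only [hYdef, Matrix.transpose_mul, hinv, Matrix.mul_assoc,
          Matrix.nonsing_inv_mul_cancel_left _ _ hdet]
        abel
      have expand : ((Y * Θᵀ + Θ * Yᵀ - Y * Λ * Yᵀ) * SXX).trace
          = a * ((Y * Θ₁ᵀ + Θ₁ * Yᵀ - Y * Λ₁ * Yᵀ) * SXX).trace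
            + b * ((Y * Θ₂ᵀ + Θ₂ * Yᵀ - Y * Λ₂ * Yᵀ) * SXX).trace := by
        simp only [hΛdef, hΘdef, Matrix.transpose_add, Matrix.transpose_smul,
          Matrix.mul_add, Matrix.add_mul, Matrix.mul_smul, Matrix.smul_mul,
          Matrix.sub_mul, Matrix.trace_add, Matrix.trace_sub, Matrix.trace_smul, smul_eq_mul]
        ring
      have i1 := frac_key_ineq hSXX.posSemidef hs₁ hpd₁ Θ₁ Y
      have i2 := frac_key_ineq hSXX.posSemidef hs₂ hpd₂ Θ₂ Y
      rw [traceInner_frac_eq hΛs, traceInner_frac_eq hs₁, traceInner_frac_eq hs₂,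
        ← eqY, expand]
      have := add_le_add (mul_le_mul_of_nonneg_left i1 ha) (mul_le_mul_of_nonneg_left i2 hb)
      linarith
    show -c * Real.log ((a • P₁ + b • P₂).1).det + traceInner ((a • P₁ + b • P₂).1) SYY
          + 2 * traceInner ((a • P₁ + b • P₂).2)ᵀ SYX
          + traceInner ((a • P₁ + b • P₂).2 * ((a • P₁ + b • P₂).1)⁻¹
              * ((a • P₁ + b • P₂).2)ᵀ) SXX
        ≤ a • (-c * Real.log Λ₁.det + traceInner Λ₁ SYY + 2 * traceInner Θ₁ᵀ SYX
              + traceInner (Θ₁ * Λ₁⁻¹ * Θ₁ᵀ) SXX)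
          + b • (-c * Real.log Λ₂.det + traceInner Λ₂ SYY + 2 * traceInner Θ₂ᵀ SYX
              + traceInner (Θ₂ * Λ₂⁻¹ * Θ₂ᵀ) SXX)
    rw [hfst, hsnd]
    simp only [smul_eq_mul]
    rw [hlin1, hlin2]
    linarith
end

section
/- For λ1, λ2 ≥ 0 and x ∈ R^K, the minimizer of t ↦ (1/2)‖t - x‖^2 + λ1‖t‖_1 + λ2‖t‖_2 is obtained by first soft-thresholding each coordinate, s_k = S(x_k, λ1), and then group-shrinking: t*_k = s_k · max(1 - λ2/‖s‖_2, 0), i.e., the proximal operator of λ1‖·‖_1 + λ2‖·‖_2 is the composition of the two proximal operators. -/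
open Finset
open scoped RealInnerProductSpace


lemma sgl_aux (K : ℕ) (lam1 lam2 : ℝ) (hlam1 : 0 ≤ lam1) (hlam2 : 0 ≤ lam2)
    (x tstar g h : EuclideanSpace ℝ (Fin K))
    (hg2 : ∀ k, |g k| ≤ 1) (hg3 : ∀ k, g k * tstar k = |tstar k|)
    (hh2 : ‖h‖ ≤ 1) (hh3 : ⟪h, tstar⟫ = ‖tstar‖)
    (hx : x - tstar = lam1 • g + lam2 • h) :
    ∀ t : EuclideanSpace ℝ (Fin K),
      ((1 / 2) * ‖tstar - x‖ ^ 2 + lam1 * ∑ k, |tstar k| + lam2 * ‖tstar‖)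
        + (1 / 2) * ‖t - tstar‖ ^ 2
      ≤ (1 / 2) * ‖t - x‖ ^ 2 + lam1 * ∑ k, |t k| + lam2 * ‖t‖ := by
  intro t
  set a : EuclideanSpace ℝ (Fin K) := t - tstar with ha
  have h1 : ‖t - x‖ ^ 2 = ‖a‖ ^ 2 + 2 * ⟪a, tstar - x⟫ + ‖tstar - x‖ ^ 2 := by
    have : t - x = a + (tstar - x) := by rw [ha]; abel
    rw [this, norm_add_sq_real]
  have h2 : ⟪a, x - tstar⟫ = lam1 * ⟪a, g⟫ + lam2 * ⟪a, h⟫ := by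
    rw [hx, inner_add_right, real_inner_smul_right, real_inner_smul_right]
  have h3 : ⟪a, g⟫ ≤ (∑ k, |t k|) - ∑ k, |tstar k| := by
    have : ⟪a, g⟫ = ∑ k, a k * g k := by
      simp [PiLp.inner_apply, RCLike.inner_apply, conj_trivial]
      exact Finset.sum_congr rfl fun _ _ => mul_comm _ _
    rw [this, ← Finset.sum_sub_distrib]
    apply Finset.sum_le_sum
    intro k _
    have hak : a k = t k - tstar k := by simp [ha]
    have h4 : t k * g k ≤ |t k| := by
      calc t k * g k ≤ |t k * g k| := le_abs_self _
        _ = |t k| * |g k| := abs_mul _ _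
        _ ≤ |t k| * 1 := by
            exact mul_le_mul_of_nonneg_left (hg2 k) (abs_nonneg _)
        _ = |t k| := mul_one _
    have h5 : g k * tstar k = |tstar k| := hg3 k
    rw [hak]
    nlinarith [h4, h5]
  have h4 : ⟪a, h⟫ ≤ ‖t‖ - ‖tstar‖ := by
    have e1 : ⟪a, h⟫ = ⟪t, h⟫ - ⟪tstar, h⟫ := by
      rw [ha, inner_sub_left]
    have e2 : ⟪tstar, h⟫ = ‖tstar‖ := by rw [real_inner_comm]; exact hh3
    have e3 : ⟪t, h⟫ ≤ ‖t‖ := by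
      calc ⟪t, h⟫ ≤ ‖t‖ * ‖h‖ := real_inner_le_norm _ _
        _ ≤ ‖t‖ * 1 := mul_le_mul_of_nonneg_left hh2 (norm_nonneg _)
        _ = ‖t‖ := mul_one _
    linarith
  have h5 : ⟪a, tstar - x⟫ = -⟪a, x - tstar⟫ := by
    rw [← inner_neg_right]; congr 1; abel
  have h6 := mul_le_mul_of_nonneg_left h3 hlam1
  have h7 := mul_le_mul_of_nonneg_left h4 hlam2
  rw [h1]
  linarith [h2, h5, h6, h7]

/-- For `λ₁, λ₂ ≥ 0` and `x ∈ ℝ^K`, the minimizer of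
`t ↦ (1/2)‖t - x‖² + λ₁‖t‖₁ + λ₂‖t‖₂` is obtained by first soft-thresholding each
coordinate, `s k = S(x k, λ₁)`, then group-shrinking `t* k = s k · max(1 - λ₂/‖s‖₂, 0)`:
the proximal operator of `λ₁‖·‖₁ + λ₂‖·‖₂` is the composition of the two proximal
operators (with `t* = 0` when `‖s‖₂ = 0`, by the convention `λ₂/0 = 0` giving the
factor `max(1 - λ₂/0, 0)` multiplied by `s = 0`). -/
theorem sparse_group_lasso_prox_composition
    (K : ℕ) (lam1 lam2 : ℝ) (hlam1 : 0 ≤ lam1) (hlam2 : 0 ≤ lam2)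
    (x s tstar : EuclideanSpace ℝ (Fin K))
    (hs : ∀ k, s k = Real.sign (x k) * max (|x k| - lam1) 0)
    (hts : ∀ k, tstar k = s k * max (1 - lam2 / ‖s‖) 0) :
    (∀ t : EuclideanSpace ℝ (Fin K),
        (1 / 2) * ‖tstar - x‖ ^ 2 + lam1 * ∑ k, |tstar k| + lam2 * ‖tstar‖
          ≤ (1 / 2) * ‖t - x‖ ^ 2 + lam1 * ∑ k, |t k| + lam2 * ‖t‖)
    ∧ ∀ t : EuclideanSpace ℝ (Fin K),
        (∀ u : EuclideanSpace ℝ (Fin K),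
            (1 / 2) * ‖t - x‖ ^ 2 + lam1 * ∑ k, |t k| + lam2 * ‖t‖
              ≤ (1 / 2) * ‖u - x‖ ^ 2 + lam1 * ∑ k, |u k| + lam2 * ‖u‖) →
        t = tstar := by
  set c : ℝ := max (1 - lam2 / ‖s‖) 0 with hcdef
  have hc0 : 0 ≤ c := le_max_right _ _
  -- coordinatewise facts about soft-thresholding
  have hcoord : ∀ k, |x k - s k| ≤ lam1 ∧ (x k - s k) * s k = lam1 * |s k| := by
    intro k
    rcases le_or_gt |x k| lam1 with hle | hgt
    · have hsk : s k = 0 := by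
        rw [hs k, max_eq_right (by linarith), mul_zero]
      rw [hsk]
      constructor
      · simpa using hle
      · simp
    · have hmax : max (|x k| - lam1) 0 = |x k| - lam1 :=
        max_eq_left (by linarith)
      rcases lt_trichotomy (x k) 0 with hneg | hzero | hpos
      · have hsgn : Real.sign (x k) = -1 := Real.sign_of_neg hneg
        have habs : |x k| = -x k := abs_of_neg hneg
        have hsk : s k = x k + lam1 := by
          rw [hs k, hmax, hsgn, habs]; ring
        have hskneg : s k < 0 := by
          rw [hsk]; rw [habs] at hgt; linarith
        have hskneg' : x k + lam1 < 0 := by rw [← hsk]; exact hskneg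
        rw [hsk]
        constructor
        · rw [show x k - (x k + lam1) = -lam1 by ring, abs_neg, abs_of_nonneg hlam1]
        · rw [abs_of_neg hskneg']; ring
      · exfalso; rw [hzero] at hgt; simp at hgt; linarith
      · have hsgn : Real.sign (x k) = 1 := Real.sign_of_pos hpos
        have habs : |x k| = x k := abs_of_pos hpos
        have hsk : s k = x k - lam1 := by
          rw [hs k, hmax, hsgn, habs]; ring
        have hskpos : 0 < s k := by
          rw [hsk]; rw [habs] at hgt; linarith
        have hskpos' : 0 < x k - lam1 := by rw [← hsk]; exact hskpos
        rw [hsk]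
        constructor
        · rw [show x k - (x k - lam1) = lam1 by ring, abs_of_nonneg hlam1]
        · rw [abs_of_pos hskpos']; ring
  -- define the subgradients
  set g : EuclideanSpace ℝ (Fin K) :=
    WithLp.toLp 2 (fun k => if lam1 = 0 then Real.sign (tstar k) else (x k - s k) / lam1) with hgdef
  set h : EuclideanSpace ℝ (Fin K) :=
    (if ‖s‖ ≤ lam2 then lam2⁻¹ • s else ‖s‖⁻¹ • s) with hhdef
  have hg1 : ∀ k, lam1 * g k = x k - s k := by
    intro k
    by_cases h0 : lam1 = 0
    · have h0' : |x k - s k| ≤ 0 := h0 ▸ (hcoord k).1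
      have hxs : x k - s k = 0 := abs_eq_zero.mp (le_antisymm h0' (abs_nonneg _))
      simp [hgdef, h0, hxs, PiLp.toLp_apply]
    · simp only [hgdef, h0, if_false, PiLp.toLp_apply]
      field_simp
  have hsign_le : ∀ y : ℝ, |Real.sign y| ≤ 1 := by
    intro y
    rcases lt_trichotomy y 0 with hy | hy | hy
    · rw [Real.sign_of_neg hy]; norm_num
    · rw [hy, Real.sign_zero]; norm_num
    · rw [Real.sign_of_pos hy]; norm_num
  have hg2 : ∀ k, |g k| ≤ 1 := by
    intro k
    by_cases h0 : lam1 = 0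
    · simp only [hgdef, h0, if_true, PiLp.toLp_apply]; exact hsign_le _
    · have hl1 : 0 < lam1 := lt_of_le_of_ne hlam1 (Ne.symm h0)
      simp only [hgdef, h0, if_false, PiLp.toLp_apply]
      rw [abs_div, abs_of_pos hl1, div_le_one hl1]
      exact (hcoord k).1
  have hg3 : ∀ k, g k * tstar k = |tstar k| := by
    intro k
    by_cases h0 : lam1 = 0
    · simp only [hgdef, h0, if_true, PiLp.toLp_apply]
      rcases lt_trichotomy (tstar k) 0 with hy | hy | hy
      · rw [Real.sign_of_neg hy, abs_of_neg hy]; ring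
      · rw [hy]; simp
      · rw [Real.sign_of_pos hy, abs_of_pos hy]; ring
    · have hl1 : 0 < lam1 := lt_of_le_of_ne hlam1 (Ne.symm h0)
      simp only [hgdef, h0, if_false, PiLp.toLp_apply]
      rw [hts k]
      have h5 := (hcoord k).2
      have : (x k - s k) / lam1 * (s k * c) = ((x k - s k) * s k) * c / lam1 := by ring
      rw [this, h5, abs_mul, abs_of_nonneg hc0]
      field_simp
  have htstar : tstar = c • s := by
    ext k
    simp only [PiLp.smul_apply, smul_eq_mul]
    rw [hts k]; ring
  have hnorm_tstar : ‖tstar‖ = c * ‖s‖ := by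
    rw [htstar, norm_smul, Real.norm_eq_abs, abs_of_nonneg hc0]
  -- facts about h
  have hh1 : lam2 • h = s - tstar := by
    by_cases hcase : ‖s‖ ≤ lam2
    · have hts0 : tstar = 0 := by
        rcases eq_or_lt_of_le (norm_nonneg s) with h0 | h0
        · have : s = 0 := norm_eq_zero.mp h0.symm
          rw [htstar, this, smul_zero]
        · have hc : c = 0 := by
            rw [hcdef]
            apply max_eq_right
            have : 1 ≤ lam2 / ‖s‖ := (one_le_div h0).mpr hcase
            linarith
          rw [htstar, hc, zero_smul]
      rw [hts0, sub_zero]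
      simp only [hhdef, hcase, if_true]
      by_cases h2 : lam2 = 0
      · have : ‖s‖ ≤ 0 := h2 ▸ hcase
        have hs0 : s = 0 := norm_eq_zero.mp (le_antisymm this (norm_nonneg s))
        rw [hs0]; simp
      · rw [smul_smul, mul_inv_cancel₀ h2, one_smul]
    · push_neg at hcase
      have hspos : 0 < ‖s‖ := lt_of_le_of_lt hlam2 hcase
      have hcval : c = 1 - lam2 / ‖s‖ := by
        rw [hcdef]
        apply max_eq_left
        have : lam2 / ‖s‖ < 1 := (div_lt_one hspos).mpr hcase
        linarith
      simp only [hhdef, not_le.mpr hcase, if_false]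
      rw [htstar, hcval]
      ext k
      simp only [PiLp.smul_apply, PiLp.sub_apply, smul_eq_mul]
      field_simp
      ring
  have hh2 : ‖h‖ ≤ 1 := by
    by_cases hcase : ‖s‖ ≤ lam2
    · simp only [hhdef, hcase, if_true]
      rw [norm_smul, Real.norm_eq_abs, abs_of_nonneg (inv_nonneg.mpr hlam2)]
      by_cases h2 : lam2 = 0
      · have : ‖s‖ ≤ 0 := h2 ▸ hcase
        have hs0 : s = 0 := norm_eq_zero.mp (le_antisymm this (norm_nonneg s))
        rw [hs0]; simp
      · have hl2 : 0 < lam2 := lt_of_le_of_ne hlam2 (Ne.symm h2)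
        rw [inv_mul_le_iff₀ hl2]
        linarith
    · push_neg at hcase
      have hspos : 0 < ‖s‖ := lt_of_le_of_lt hlam2 hcase
      simp only [hhdef, not_le.mpr hcase, if_false]
      rw [norm_smul, Real.norm_eq_abs, abs_of_nonneg (inv_nonneg.mpr hspos.le)]
      rw [inv_mul_cancel₀ (ne_of_gt hspos)]
  have hh3 : ⟪h, tstar⟫ = ‖tstar‖ := by
    by_cases hcase : ‖s‖ ≤ lam2
    · have hts0 : tstar = 0 := by
        rcases eq_or_lt_of_le (norm_nonneg s) with h0 | h0
        · have : s = 0 := norm_eq_zero.mp h0.symm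
          rw [htstar, this, smul_zero]
        · have hc : c = 0 := by
            rw [hcdef]
            apply max_eq_right
            have : 1 ≤ lam2 / ‖s‖ := (one_le_div h0).mpr hcase
            linarith
          rw [htstar, hc, zero_smul]
      rw [hts0, inner_zero_right, norm_zero]
    · push_neg at hcase
      have hspos : 0 < ‖s‖ := lt_of_le_of_lt hlam2 hcase
      simp only [hhdef, not_le.mpr hcase, if_false]
      rw [htstar, real_inner_smul_left, real_inner_smul_right,
        real_inner_self_eq_norm_sq, norm_smul, Real.norm_eq_abs,
        abs_of_nonneg hc0]
      field_simp
  have hx : x - tstar = lam1 • g + lam2 • h := by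
    ext k
    have e1 : (lam2 • h) k = s k - tstar k := by rw [hh1]; simp
    simp only [PiLp.sub_apply, PiLp.add_apply, PiLp.smul_apply, smul_eq_mul]
    rw [hg1 k]
    have : lam2 * h k = s k - tstar k := by
      simpa [smul_eq_mul] using e1
    rw [this]; ring
  have key := sgl_aux K lam1 lam2 hlam1 hlam2 x tstar g h hg2 hg3 hh2 hh3 hx
  constructor
  · intro t
    have := key t
    nlinarith [sq_nonneg ‖t - tstar‖]
  · intro t hmin
    have h1 := key t
    have h2 := hmin tstar
    have h3 : ‖t - tstar‖ ^ 2 ≤ 0 := by linarith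
    have h4 : ‖t - tstar‖ = 0 := by
      nlinarith [norm_nonneg (t - tstar)]
    have : t - tstar = 0 := norm_eq_zero.mp h4
    exact sub_eq_zero.mp this
end

section
/- Let g be convex and differentiable with L-Lipschitz gradient, pen convex, and let θ^+ = prox_{α·pen}(θ - α∇g(θ)) with step size 0 < α ≤ 1/L. Then f(θ^+) ≤ f(θ) - (α/2)‖G_α(θ)‖^2, where f = g + pen and G_α(θ) = (θ - θ^+)/α is the generalized gradient; in particular the proximal gradient step does not increase f. -/
open RealInnerProductSpace

/-- Descent lemma for L-Lipschitz gradient. -/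
lemma descent_aux {E : Type*} [NormedAddCommGroup E] [InnerProductSpace ℝ E] [CompleteSpace E]
    (g : E → ℝ) (g' : E → E) (hg' : ∀ x, HasGradientAt g (g' x) x)
    (L : ℝ) (hL : 0 ≤ L) (hLip : ∀ u v, ‖g' u - g' v‖ ≤ L * ‖u - v‖) (x y : E) :
    g y ≤ g x + ⟪g' x, y - x⟫ + L / 2 * ‖y - x‖ ^ 2 := by
  set dd : E := y - x with hdd
  set φ : ℝ → ℝ := fun t => g (x + t • dd) - t * ⟪g' x, dd⟫ - L / 2 * t ^ 2 * ‖dd‖ ^ 2 with hφ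
  have hderiv : ∀ t : ℝ, HasDerivAt φ
      (⟪g' (x + t • dd), dd⟫ - ⟪g' x, dd⟫ - L * t * ‖dd‖ ^ 2) t := by
    intro t
    have h1 : HasDerivAt (fun t : ℝ => x + t • dd) dd t := by
      simpa using ((hasDerivAt_id t).smul_const dd).const_add x
    have h2 : HasDerivAt (fun t : ℝ => g (x + t • dd)) ⟪g' (x + t • dd), dd⟫ t := by
      have := (hg' (x + t • dd)).hasFDerivAt.comp_hasDerivAt t h1
      have h := this
      simp [InnerProductSpace.toDual_apply_apply] at h
      exact h
    have h3 : HasDerivAt (fun t : ℝ => t * ⟪g' x, dd⟫) ⟪g' x, dd⟫ t := by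
      simpa using (hasDerivAt_id t).mul_const ⟪g' x, dd⟫
    have h4 : HasDerivAt (fun t : ℝ => L / 2 * t ^ 2 * ‖dd‖ ^ 2) (L * t * ‖dd‖ ^ 2) t := by
      have := ((hasDerivAt_pow 2 t).const_mul (L / 2)).mul_const (‖dd‖ ^ 2)
      exact this.congr_deriv (by rw [show (2:ℕ) - 1 = 1 from rfl]; push_cast; ring)
    exact (h2.sub h3).sub h4
  have hmono : φ 1 ≤ φ 0 := by
    have := antitoneOn_of_deriv_nonpos (convex_Icc (0:ℝ) 1)
      (fun t _ => ((hderiv t).continuousAt.continuousWithinAt))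
      (fun t _ => (hderiv t).differentiableAt.differentiableWithinAt)
      (fun t ht => by
        rw [(hderiv t).deriv]
        have ht' : 0 < t ∧ t < 1 := by simpa [interior_Icc] using ht
        have h5 : ⟪g' (x + t • dd) - g' x, dd⟫ ≤ ‖g' (x + t • dd) - g' x‖ * ‖dd‖ :=
          real_inner_le_norm _ _
        have h6 : ‖g' (x + t • dd) - g' x‖ ≤ L * (t * ‖dd‖) := by
          have := hLip (x + t • dd) x
          simpa [norm_smul, abs_of_pos ht'.1] using this
        have h7 : ⟪g' (x + t • dd) - g' x, dd⟫ = ⟪g' (x + t • dd), dd⟫ - ⟪g' x, dd⟫ :=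
          inner_sub_left _ _ _
        nlinarith [norm_nonneg dd, mul_nonneg (mul_nonneg hL (le_of_lt ht'.1)) (norm_nonneg dd)])
    exact this (by norm_num) (by norm_num) (by norm_num)
  have h0 : φ 0 = g x := by simp [hφ]
  have h1 : φ 1 = g y - ⟪g' x, dd⟫ - L / 2 * ‖dd‖ ^ 2 := by simp [hφ, hdd]
  rw [h0, h1] at hmono
  linarith

set_option maxHeartbeats 1000000 in
/-- Proximal gradient descent lemma: with `g` convex differentiable with `L`-Lipschitz
gradient `g'`, `pen` convex, step size `0 < α ≤ 1/L`, and
`θ⁺ = prox_{α·pen}(θ - α∇g(θ))` (characterized as the minimizer of the prox objective),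
the objective `f = g + pen` satisfies `f(θ⁺) ≤ f(θ) - (α/2)‖G_α(θ)‖²` where
`G_α(θ) = (θ - θ⁺)/α` is the generalized gradient; in particular the step does not
increase `f`. -/
theorem proximal_gradient_descent_lemma
    {d : ℕ} (g : EuclideanSpace ℝ (Fin d) → ℝ) (g' : EuclideanSpace ℝ (Fin d) → EuclideanSpace ℝ (Fin d))
    (pen : EuclideanSpace ℝ (Fin d) → ℝ)
    (hg : ConvexOn ℝ Set.univ g)
    (hg' : ∀ x, HasGradientAt g (g' x) x)
    (L : ℝ) (hL : 0 < L)
    (hLip : ∀ u v, ‖g' u - g' v‖ ≤ L * ‖u - v‖)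
    (hpen : ConvexOn ℝ Set.univ pen)
    (α : ℝ) (hα : 0 < α) (hαL : α ≤ 1 / L)
    (θ θplus : EuclideanSpace ℝ (Fin d))
    (hprox : ∀ u, (1 / (2 * α)) * ‖θplus - (θ - α • g' θ)‖ ^ 2 + pen θplus
        ≤ (1 / (2 * α)) * ‖u - (θ - α • g' θ)‖ ^ 2 + pen u) :
    g θplus + pen θplus
      ≤ g θ + pen θ - (α / 2) * ‖(1 / α) • (θ - θplus)‖ ^ 2 := by
  set v : EuclideanSpace ℝ (Fin d) := θ - α • g' θ with hv
  set D : EuclideanSpace ℝ (Fin d) := θ - θplus with hD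
  -- strengthened prox inequality via convexity + limit
  have key : pen θplus ≤ pen θ + (1 / α) * ⟪θplus - v, D⟫ := by
    have step : ∀ t : ℝ, 0 < t → t ≤ 1 →
        pen θplus ≤ pen θ + (1 / α) * ⟪θplus - v, D⟫ + t / (2 * α) * ‖D‖ ^ 2 := by
      intro t ht0 ht1
      have hu := hprox (θplus + t • D)
      have hconv : pen (θplus + t • D) ≤ (1 - t) * pen θplus + t * pen θ := by
        have := hpen.2 (Set.mem_univ θplus) (Set.mem_univ θ) (by linarith : (0:ℝ) ≤ 1 - t)
          (le_of_lt ht0) (by ring)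
        have he : (1 - t) • θplus + t • θ = θplus + t • D := by
          rw [hD, sub_smul, one_smul, smul_sub]; abel
        rwa [he] at this
      have hnorm : ‖θplus + t • D - v‖ ^ 2
          = ‖θplus - v‖ ^ 2 + 2 * (t * ⟪θplus - v, D⟫) + t ^ 2 * ‖D‖ ^ 2 := by
        have h8 : θplus + t • D - v = (θplus - v) + t • D := by abel
        rw [h8, norm_add_sq_real, real_inner_smul_right, norm_smul]
        ring_nf
        simp [Real.norm_eq_abs, sq_abs]
      have hα2 : 0 < 2 * α := by linarith
      have h9 := le_trans hu (by linarith : (1 / (2 * α)) * ‖θplus + t • D - v‖ ^ 2 + pen (θplus + t • D)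
          ≤ (1 / (2 * α)) * ‖θplus + t • D - v‖ ^ 2 + ((1 - t) * pen θplus + t * pen θ))
      rw [hnorm] at h9
      -- t * pen θplus ≤ t * pen θ + (t/α)⟪⟫ + t²/(2α)‖D‖²
      have h10 : t * pen θplus ≤ t * pen θ + t * ((1 / α) * ⟪θplus - v, D⟫)
          + t * (t / (2 * α) * ‖D‖ ^ 2) := by
        have e1 : (1 / (2 * α)) * (2 * (t * ⟪θplus - v, D⟫)) = t * ((1 / α) * ⟪θplus - v, D⟫) := by
          field_simp
        have e2 : (1 / (2 * α)) * (t ^ 2 * ‖D‖ ^ 2) = t * (t / (2 * α) * ‖D‖ ^ 2) := by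
          first | (field_simp; ring) | field_simp
        nlinarith [h9]
      have := (mul_le_mul_iff_right₀ ht0).mp (by linarith : t * pen θplus ≤ t * (pen θ + (1 / α) * ⟪θplus - v, D⟫ + t / (2 * α) * ‖D‖ ^ 2))
      linarith [this]
    refine le_of_forall_pos_le_add ?_
    intro ε hε
    set t : ℝ := min 1 (2 * α * ε / (‖D‖ ^ 2 + 1)) with htdef
    have hDpos : (0:ℝ) < ‖D‖ ^ 2 + 1 := by positivity
    have ht0 : 0 < t := lt_min one_pos (by positivity)
    have ht1 : t ≤ 1 := min_le_left _ _
    have hs := step t ht0 ht1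
    have hbound : t / (2 * α) * ‖D‖ ^ 2 ≤ ε := by
      have ht2 : t ≤ 2 * α * ε / (‖D‖ ^ 2 + 1) := min_le_right _ _
      have : t / (2 * α) * ‖D‖ ^ 2 ≤ (2 * α * ε / (‖D‖ ^ 2 + 1)) / (2 * α) * ‖D‖ ^ 2 := by
        gcongr <;> linarith
      calc t / (2 * α) * ‖D‖ ^ 2 ≤ (2 * α * ε / (‖D‖ ^ 2 + 1)) / (2 * α) * ‖D‖ ^ 2 := this
        _ = ε * (‖D‖ ^ 2 / (‖D‖ ^ 2 + 1)) := by field_simp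
        _ ≤ ε * 1 := by
            gcongr
            rw [div_le_one hDpos]; linarith
        _ = ε := mul_one ε
    linarith
  -- descent lemma
  have hdesc : g θplus ≤ g θ + ⟪g' θ, θplus - θ⟫ + L / 2 * ‖θplus - θ‖ ^ 2 :=
    descent_aux g g' hg' L (le_of_lt hL) hLip θ θplus
  -- combine
  have hinner : ⟪θplus - v, D⟫ = -‖D‖ ^ 2 + α * ⟪g' θ, D⟫ := by
    have : θplus - v = -D + α • g' θ := by rw [hv, hD]; abel
    rw [this, inner_add_left, real_inner_smul_left, inner_neg_left, real_inner_self_eq_norm_sq]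
  have hip : ⟪g' θ, θplus - θ⟫ = -⟪g' θ, D⟫ := by
    rw [hD, ← inner_neg_right]; congr 1; abel
  have hnD : ‖θplus - θ‖ = ‖D‖ := by rw [hD, ← norm_neg]; congr 1; abel
  have hLα : L ≤ 1 / α := by
    rw [le_div_iff₀ hα]
    rw [le_div_iff₀ hL] at hαL
    linarith
  have hGnorm : ‖(1 / α) • D‖ ^ 2 = (1 / α) ^ 2 * ‖D‖ ^ 2 := by
    rw [norm_smul, mul_pow, Real.norm_eq_abs, sq_abs]
  rw [hinner] at key
  rw [hip, hnD] at hdesc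
  have hfinal : (α / 2) * ‖(1 / α) • D‖ ^ 2 = 1 / (2 * α) * ‖D‖ ^ 2 := by
    rw [hGnorm]; first | (field_simp; ring) | field_simp
  rw [hfinal]
  have hL2 : L / 2 * ‖D‖ ^ 2 - (1/α) * ‖D‖ ^ 2 ≤ - (1 / (2*α)) * ‖D‖ ^ 2 := by
    have : L / 2 - 1/α ≤ -(1/(2*α)) := by
      have h2 : 1/(2*α) * 2 = 1/α := by field_simp
      linarith
    nlinarith [sq_nonneg ‖D‖]
  have key2 : pen θplus ≤ pen θ + (1/α) * (-‖D‖^2 + α * ⟪g' θ, D⟫) := key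
  have e3 : (1/α) * (-‖D‖^2 + α * ⟪g' θ, D⟫) = -(1/α) * ‖D‖^2 + ⟪g' θ, D⟫ := by
    field_simp
  rw [e3] at key2
  linarith
end
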